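/- For any disjunctive sequent calculus (L(P),⊢), the poset (|(L(P),⊢)|,⊆) of all logical states ordered by set inclusion is an algebraic L-domain. -/

import Mathlib

/- ## Syntax of disjunctive propositional logic -/

/-- Raw formulae over a set `P` of atomic formulae: atoms, the constants
`T` and `F`, binary conjunction, and disjunction of an arbitrary family
of formulae. -/
inductive Fm (P : Type) : Type 1 where
  | atom : P → Fm P
  | tt : Fm P
  | ff : Fm P
  | conj : Fm P → Fm P → Fm P
  | disj : {ι : Type} → (ι → Fm P) → Fm P

namespace Fm

/-- The valid sequents of the disjunctive sequent calculus generated from the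
disjunctive basis `(P, A)`, where `A` is the set of atomic disjointness
assumptions `p₁,…,pₙ ⊢ F` (each given by a finite nonempty set of atoms). -/
inductive Seq {P : Type} (A : Set (Set P)) : Set (Fm P) → Fm P → Prop where
  | ax {s : Set P} : s ∈ A → s.Finite → s.Nonempty → Seq A (Fm.atom '' s) Fm.ff
  | id (φ : Fm P) : Seq A {φ} φ
  | lwk {Γ : Set (Fm P)} {ψ : Fm P} (φ : Fm P) : Seq A Γ ψ → Seq A (insert φ Γ) ψ
  | cut {Γ Δ : Set (Fm P)} {φ ψ : Fm P} :
      Seq A Γ φ → Seq A (insert φ Δ) ψ → Seq A (Γ ∪ Δ) ψ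
  | lf (φ : Fm P) : Seq A {Fm.ff} φ
  | rt : Seq A ∅ Fm.tt
  | landl {Γ : Set (Fm P)} {φ ψ θ : Fm P} :
      Seq A (insert φ (insert ψ Γ)) θ → Seq A (insert (Fm.conj φ ψ) Γ) θ
  | randr {Γ Δ : Set (Fm P)} {φ ψ : Fm P} :
      Seq A Γ φ → Seq A Δ ψ → Seq A (Γ ∪ Δ) (Fm.conj φ ψ)
  | ldisj {Γ : Set (Fm P)} {θ : Fm P} {ι : Type} {f : ι → Fm P} :
      (∀ i, Seq A (insert (f i) Γ) θ) → (∀ i j, i ≠ j → Seq A {f i, f j} Fm.ff) →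
      Seq A (insert (Fm.disj f) Γ) θ
  | rdisj {Γ : Set (Fm P)} {ι : Type} {f : ι → Fm P} (i₀ : ι) :
      Seq A Γ (f i₀) → (∀ i j, i ≠ j → Seq A {f i, f j} Fm.ff) →
      Seq A Γ (Fm.disj f)

/-- The wellformed formulae `L(P)` generated from the disjunctive basis
`(P, A)`: disjunctions are only formed over provably pairwise disjoint
families. -/
inductive WF {P : Type} (A : Set (Set P)) : Fm P → Prop where
  | atom (p : P) : WF A (Fm.atom p)
  | tt : WF A Fm.tt
  | ff : WF A Fm.ff
  | conj {φ ψ : Fm P} : WF A φ → WF A ψ → WF A (Fm.conj φ ψ)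
  | disj {ι : Type} {f : ι → Fm P} : (∀ i, WF A (f i)) →
      (∀ i j, i ≠ j → Seq A {f i, f j} Fm.ff) → WF A (Fm.disj f)

end Fm

/- ## Generic notions relative to a wellformedness predicate `W` (the set
`L(P)` of formulae) and an entailment relation `E` (the valid sequents). -/

section Defs

variable {P Q R : Type}

/-- `φ` is a tautology: `T ⊢ φ` is valid. -/
def Taut (W : Fm P → Prop) (E : Set (Fm P) → Fm P → Prop) (φ : Fm P) : Prop :=
  W φ ∧ E {Fm.tt} φ

/-- `φ` is a contradiction: `φ ⊢ F` is valid. -/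
def Contra (W : Fm P → Prop) (E : Set (Fm P) → Fm P → Prop) (φ : Fm P) : Prop :=
  W φ ∧ E {φ} Fm.ff

/-- `φ` is satisfiable: neither a tautology nor a contradiction. -/
def Satisfiable (W : Fm P → Prop) (E : Set (Fm P) → Fm P → Prop) (φ : Fm P) : Prop :=
  W φ ∧ ¬ Taut W E φ ∧ ¬ Contra W E φ

/-- Built up from atomic formulae only by conjunctive connectives. -/
inductive ConjShape {P : Type} : Fm P → Prop where
  | atom (p : P) : ConjShape (Fm.atom p)
  | conj {φ ψ : Fm P} : ConjShape φ → ConjShape ψ → ConjShape (Fm.conj φ ψ)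

/-- A conjunction: a satisfiable formula built up from atomic formulae only
by conjunctive connectives. -/
def IsConjForm (W : Fm P → Prop) (E : Set (Fm P) → Fm P → Prop) (φ : Fm P) : Prop :=
  ConjShape φ ∧ Satisfiable W E φ

/-- `X[⊢] = {φ ∈ L(P) : Γ ⊢ φ is valid for some finite Γ ⊆ X}`. -/
def entClose (W : Fm P → Prop) (E : Set (Fm P) → Fm P → Prop) (X : Set (Fm P)) :
    Set (Fm P) :=
  {φ | W φ ∧ ∃ Γ : Set (Fm P), Γ ⊆ X ∧ Γ.Finite ∧ E Γ φ}

/-- A logical state: a nonempty proper subset `S` of `L(P)` such that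
(S1) any flat formula `⋁̇ᵢ μᵢ` in `S` has some disjunct `μᵢ₀ ∈ S`, and
(S2) `S[⊢] ⊆ S`. -/
structure IsLogicalState (W : Fm P → Prop) (E : Set (Fm P) → Fm P → Prop)
    (S : Set (Fm P)) : Prop where
  nonempty : S.Nonempty
  subset : S ⊆ {φ | W φ}
  proper : S ≠ {φ | W φ}
  s1 : ∀ (ι : Type) (f : ι → Fm P), (∀ i, IsConjForm W E (f i)) →
      (∀ i j, i ≠ j → E {f i, f j} Fm.ff) → Satisfiable W E (Fm.disj f) →
      Fm.disj f ∈ S → ∃ i, f i ∈ S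
  s2 : entClose W E S ⊆ S

/-- `[X]_S`: the intersection of all logical states `T` with `X ⊆ T ⊆ S`. -/
def clIn (W : Fm P → Prop) (E : Set (Fm P) → Fm P → Prop) (X S : Set (Fm P)) :
    Set (Fm P) :=
  ⋂₀ {T | IsLogicalState W E T ∧ X ⊆ T ∧ T ⊆ S}

/-- An irreducible conjunction. -/
def IsIrredConj (W : Fm P → Prop) (E : Set (Fm P) → Fm P → Prop) (μ : Fm P) : Prop :=
  IsConjForm W E μ ∧ ∀ (ι : Type) (f : ι → Fm P), (∀ i, W (f i)) →
    (∀ i j, i ≠ j → E {f i, f j} Fm.ff) → E {μ} (Fm.disj f) → ∃ i, E {μ} (f i)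

/-- An expressive disjunctive sequent calculus: every satisfiable formula is
logically equivalent to an irreducible flat formula (from below disjunctwise). -/
def Expressive (W : Fm P → Prop) (E : Set (Fm P) → Fm P → Prop) : Prop :=
  ∀ ψ : Fm P, Satisfiable W E ψ → ∃ (ι : Type) (f : ι → Fm P),
    (∀ i, IsIrredConj W E (f i)) ∧ (∀ i j, i ≠ j → E {f i, f j} Fm.ff) ∧
    Satisfiable W E (Fm.disj f) ∧ E {ψ} (Fm.disj f) ∧ ∀ i, E {f i} ψ

/-- `Θ[X] = {φ ∈ L(Q) : (μ,φ) ∈ Θ for some μ ∈ X ∩ IC(P)}`. -/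
def ThetaImage (WP : Fm P → Prop) (EP : Set (Fm P) → Fm P → Prop)
    (Θ : Fm P → Fm Q → Prop) (X : Set (Fm P)) : Set (Fm Q) :=
  {φ | ∃ μ ∈ X, IsIrredConj WP EP μ ∧ Θ μ φ}

/-- A consequence relation `Θ ⊆ IC(P) × L(Q)` satisfying (R1), (R2), (R3). -/
def IsConsRel (WP : Fm P → Prop) (EP : Set (Fm P) → Fm P → Prop)
    (WQ : Fm Q → Prop) (EQ : Set (Fm Q) → Fm Q → Prop)
    (Θ : Fm P → Fm Q → Prop) : Prop :=
  (∀ μ ψ, Θ μ ψ → IsIrredConj WP EP μ ∧ WQ ψ) ∧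
  (∀ μ ν ψ, IsIrredConj WP EP μ → EP {μ} ν → Θ ν ψ → Θ μ ψ) ∧
  (∀ μ φ ψ, WQ ψ → Θ μ φ → EQ {φ} ψ → Θ μ ψ) ∧
  (∀ μ ψ, Θ μ ψ → ∃ ν, IsIrredConj WQ EQ ν ∧ Θ μ ν ∧ EQ {ν} ψ)

/-- Composition of consequence relations. -/
def consRelComp (WQ : Fm Q → Prop) (EQ : Set (Fm Q) → Fm Q → Prop)
    (Θ : Fm P → Fm Q → Prop) (Θ' : Fm Q → Fm R → Prop) : Fm P → Fm R → Prop :=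
  fun μ φ => ∃ ν, IsIrredConj WQ EQ ν ∧ Θ μ ν ∧ Θ' ν φ

/-- The identity consequence relation `(μ,φ) ∈ id_P ↔ φ ∈ {μ}[⊢_P]`. -/
def consRelId (W : Fm P → Prop) (E : Set (Fm P) → Fm P → Prop) : Fm P → Fm P → Prop :=
  fun μ φ => IsIrredConj W E μ ∧ φ ∈ entClose W E {μ}

end Defs

/-- The poset of logical states of the calculus generated by the basis `(P,A)`,
ordered by set inclusion. -/
abbrev LSt (P : Type) (A : Set (Set P)) : Type 1 :=
  {S : Set (Fm P) // IsLogicalState (Fm.WF A) (Fm.Seq A) S}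

/- ## Domain-theoretic notions -/

/-- A compact element of a poset (w.r.t. suprema of directed subsets). -/
def IsCompactElt {α : Type*} [PartialOrder α] (x : α) : Prop :=
  ∀ d : Set α, d.Nonempty → DirectedOn (· ≤ ·) d → ∀ s, IsLUB d s → x ≤ s →
    ∃ y ∈ d, x ≤ y

/-- An algebraic domain: a pointed dcpo in which every element is the
supremum of the directed set of compact elements below it. -/
def IsAlgebraicDomain (α : Type*) [PartialOrder α] : Prop :=
  (∃ b : α, ∀ x, b ≤ x) ∧
  (∀ d : Set α, d.Nonempty → DirectedOn (· ≤ ·) d → ∃ s, IsLUB d s) ∧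
  (∀ x : α, ({k : α | IsCompactElt k ∧ k ≤ x}).Nonempty ∧
    DirectedOn (· ≤ ·) {k : α | IsCompactElt k ∧ k ≤ x} ∧
    IsLUB {k : α | IsCompactElt k ∧ k ≤ x} x)

/-- An algebraic L-domain: an algebraic domain in which every principal ideal
`↓x` is a complete lattice (every subset of `↓x` has a supremum in `↓x`). -/
def IsAlgebraicLDomain (α : Type*) [PartialOrder α] : Prop :=
  IsAlgebraicDomain α ∧
  ∀ x : α, ∀ T : Set α, T ⊆ Set.Iic x → ∃ s ∈ Set.Iic x,
    (∀ t ∈ T, t ≤ s) ∧ ∀ u ∈ Set.Iic x, (∀ t ∈ T, t ≤ u) → s ≤ u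

/- ## The calculus associated with an algebraic L-domain -/

/-- The atomic formulae of the associated calculus: (upsets of) elements of
`K*(D)`, the compact non-bottom elements. -/
abbrev LAtom (D : Type) [PartialOrder D] : Type := {x : D // IsCompactElt x ∧ ¬ IsBot x}

/-- The interpretation `φ̂ ⊆ D` of a formula: `F, T, ∧, ⋁̇` become
`∅, D`, intersection and union. -/
def hat {D : Type} [PartialOrder D] : Fm (LAtom D) → Set D
  | Fm.atom x => Set.Ici x.val
  | Fm.tt => Set.univ
  | Fm.ff => ∅
  | Fm.conj φ ψ => hat φ ∩ hat ψ
  | Fm.disj f => ⋃ i, hat (f i)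

/-- The formulae `L(P_D)` of the associated calculus: disjunctions only of
families with pairwise disjoint interpretations. -/
inductive DWF {D : Type} [PartialOrder D] : Fm (LAtom D) → Prop where
  | atom (p : LAtom D) : DWF (Fm.atom p)
  | tt : DWF Fm.tt
  | ff : DWF Fm.ff
  | conj {φ ψ : Fm (LAtom D)} : DWF φ → DWF ψ → DWF (Fm.conj φ ψ)
  | disj {ι : Type} {f : ι → Fm (LAtom D)} : (∀ i, DWF (f i)) →
      (∀ i j, i ≠ j → hat (f i) ∩ hat (f j) = ∅) → DWF (Fm.disj f)

/-- Validity in the associated calculus: `ψ₁,…,ψₙ ⊢_D φ` iff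
`ψ̂₁ ∩ … ∩ ψ̂ₙ ⊆ φ̂`. -/
def DSeq {D : Type} [PartialOrder D] (Γ : Set (Fm (LAtom D))) (φ : Fm (LAtom D)) : Prop :=
  ⋂₀ (hat '' Γ) ⊆ hat φ

/-- A decomposable subset of `D`: the upper set `↑A` of a pairwise
inconsistent set `A` of compact elements. -/
def IsDecomposable {D : Type} [PartialOrder D] (U : Set D) : Prop :=
  ∃ A : Set D, (∀ a ∈ A, IsCompactElt a) ∧
    (∀ a ∈ A, ∀ b ∈ A, a ≠ b → Set.Ici a ∩ Set.Ici b = ∅) ∧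
    U = ⋃ a ∈ A, Set.Ici a

/-- The conjunction `↑x₁ ∧ ↑x₂ ∧ … ∧ ↑xₙ` of a nonempty list of atoms. -/
def bigConj {P : Type} (x : P) (l : List P) : Fm P :=
  l.foldl (fun φ y => Fm.conj φ (Fm.atom y)) (Fm.atom x)

section Stmt9Aux

variable {P : Type} {A : Set (Set P)}

/-- The all-false valuation on raw formulae. -/
def fmVal : Fm P → Prop
  | Fm.atom _ => False
  | Fm.tt => True
  | Fm.ff => False
  | Fm.conj φ ψ => fmVal φ ∧ fmVal ψ
  | Fm.disj f => ∃ i, fmVal (f i)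

theorem fmVal_sound {Γ : Set (Fm P)} {φ : Fm P} (h : Fm.Seq A Γ φ) :
    (∀ γ ∈ Γ, fmVal γ) → fmVal φ := by
  induction h with
  | ax hs hfin hne =>
      intro hΓ
      obtain ⟨p, hp⟩ := hne
      exact absurd (hΓ _ ⟨p, hp, rfl⟩) (by simp [fmVal])
  | id φ => exact fun hΓ => hΓ φ rfl
  | lwk φ h ih => exact fun hΓ => ih fun γ hγ => hΓ γ (Set.mem_insert_of_mem _ hγ)
  | cut h1 h2 ih1 ih2 =>
      intro hΓ
      refine ih2 fun γ hγ => ?_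
      rcases hγ with hγ | hγ
      · exact hγ ▸ ih1 fun δ hδ => hΓ δ (Set.mem_union_left _ hδ)
      · exact hΓ γ (Set.mem_union_right _ hγ)
  | lf φ => exact fun hΓ => absurd (hΓ _ rfl) (by simp [fmVal])
  | rt => exact fun _ => trivial
  | landl h ih =>
      intro hΓ
      have hc : fmVal (Fm.conj _ _) := hΓ _ (Set.mem_insert _ _)
      simp only [fmVal] at hc
      refine ih fun γ hγ => ?_
      rcases hγ with hγ | hγ | hγ
      · exact hγ ▸ hc.1
      · exact hγ ▸ hc.2
      · exact hΓ γ (Set.mem_insert_of_mem _ hγ)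
  | randr h1 h2 ih1 ih2 =>
      intro hΓ
      exact ⟨ih1 fun γ hγ => hΓ γ (Set.mem_union_left _ hγ),
             ih2 fun γ hγ => hΓ γ (Set.mem_union_right _ hγ)⟩
  | ldisj h hd ih =>
      intro hΓ
      have hc : fmVal (Fm.disj _) := hΓ _ (Set.mem_insert _ _)
      obtain ⟨i, hi⟩ := hc
      refine ih i fun γ hγ => ?_
      rcases hγ with hγ | hγ
      · exact hγ ▸ hi
      · exact hΓ γ (Set.mem_insert_of_mem _ hγ)
  | rdisj i₀ h hd ih => exact fun hΓ => ⟨i₀, ih hΓ⟩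

theorem not_seq_tt_ff : ¬ Fm.Seq A {Fm.tt} Fm.ff := by
  intro h
  have : fmVal (Fm.ff : Fm P) :=
    fmVal_sound h (by intro γ hγ; rw [Set.mem_singleton_iff] at hγ; subst hγ; trivial)
  simpa [fmVal] using this

theorem tt_mem_state {S : Set (Fm P)} (hS : IsLogicalState (Fm.WF A) (Fm.Seq A) S) :
    Fm.tt ∈ S :=
  hS.s2 ⟨Fm.WF.tt, ∅, Set.empty_subset _, Set.finite_empty, Fm.Seq.rt⟩

theorem ff_not_mem_state {S : Set (Fm P)} (hS : IsLogicalState (Fm.WF A) (Fm.Seq A) S) :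
    Fm.ff ∉ S := by
  intro hff
  apply hS.proper
  refine Set.Subset.antisymm hS.subset fun φ hφ => ?_
  exact hS.s2 ⟨hφ, {Fm.ff}, Set.singleton_subset_iff.mpr hff, Set.finite_singleton _,
    Fm.Seq.lf φ⟩

theorem ne_wf_of_ff_not_mem {S : Set (Fm P)} (h : Fm.ff ∉ S) :
    S ≠ {φ | Fm.WF A φ} := fun he => h (by rw [he]; exact Fm.WF.ff)

theorem not_both_mem {S : Set (Fm P)} (hS : IsLogicalState (Fm.WF A) (Fm.Seq A) S)
    {φ ψ : Fm P} (hφ : φ ∈ S) (hψ : ψ ∈ S) (h : Fm.Seq A {φ, ψ} Fm.ff) : False := by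
  refine ff_not_mem_state hS (hS.s2 ⟨Fm.WF.ff, {φ, ψ}, ?_, ?_, h⟩)
  · intro x hx; rcases hx with hx | hx
    · exact hx ▸ hφ
    · exact hx ▸ hψ
  · exact (Set.finite_singleton ψ).insert φ

theorem cut_taut {Γ : Set (Fm P)} (hΓ : Γ.Finite) :
    ∀ Δ φ, Fm.Seq A (Γ ∪ Δ) φ → (∀ γ ∈ Γ, Fm.Seq A {Fm.tt} γ) →
    Fm.Seq A (insert Fm.tt Δ) φ := by
  refine Set.Finite.induction_on (motive := fun Γ _ => ∀ Δ φ, Fm.Seq A (Γ ∪ Δ) φ →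
      (∀ γ ∈ Γ, Fm.Seq A {Fm.tt} γ) → Fm.Seq A (insert Fm.tt Δ) φ) Γ hΓ ?_ ?_
  · intro Δ φ h _
    rw [Set.empty_union] at h
    exact Fm.Seq.lwk _ h
  · intro γ Γ' hnm hfin ih
    · intro Δ φ h htaut
      rw [Set.insert_union] at h
      have h2 := Fm.Seq.cut (htaut _ (Set.mem_insert _ _)) h
      rw [Set.singleton_union, ← Set.union_insert] at h2
      have h3 := ih (insert Fm.tt Δ) φ h2 fun δ hδ => htaut δ (Set.mem_insert_of_mem _ hδ)
      rwa [Set.insert_idem] at h3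

/-- The set of tautologies: the least logical state. -/
def tautSet (A : Set (Set P)) : Set (Fm P) := {φ | Fm.WF A φ ∧ Fm.Seq A {Fm.tt} φ}

theorem tautSet_state : IsLogicalState (Fm.WF A) (Fm.Seq A) (tautSet A) where
  nonempty := ⟨Fm.tt, Fm.WF.tt, Fm.Seq.id _⟩
  subset := fun _ h => h.1
  proper := ne_wf_of_ff_not_mem fun h => not_seq_tt_ff h.2
  s1 := fun ι f _ _ hsat hmem => absurd ⟨hmem.1, hmem.2⟩ hsat.2.1
  s2 := by
    rintro φ ⟨hW, Γ, hsub, hfin, hseq⟩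
    refine ⟨hW, ?_⟩
    have h := cut_taut hfin ∅ φ (by rwa [Set.union_empty]) fun γ hγ => (hsub hγ).2
    rwa [LawfulSingleton.insert_empty_eq] at h

theorem tautSet_subset {S : Set (Fm P)} (hS : IsLogicalState (Fm.WF A) (Fm.Seq A) S) :
    tautSet A ⊆ S := fun φ hφ =>
  hS.s2 ⟨hφ.1, {Fm.tt}, Set.singleton_subset_iff.mpr (tt_mem_state hS),
    Set.finite_singleton _, hφ.2⟩

theorem state_sInter {S : Set (Fm P)} (hS : IsLogicalState (Fm.WF A) (Fm.Seq A) S)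
    {F : Set (Set (Fm P))} (hne : F.Nonempty)
    (hF : ∀ T ∈ F, IsLogicalState (Fm.WF A) (Fm.Seq A) T ∧ T ⊆ S) :
    IsLogicalState (Fm.WF A) (Fm.Seq A) (⋂₀ F) := by
  obtain ⟨T₀, hT₀⟩ := hne
  refine ⟨⟨Fm.tt, Set.mem_sInter.mpr fun T hT => tt_mem_state (hF T hT).1⟩,
    fun φ hφ => (hF T₀ hT₀).1.subset (Set.mem_sInter.mp hφ T₀ hT₀),
    ne_wf_of_ff_not_mem fun hff =>
      ff_not_mem_state (hF T₀ hT₀).1 (Set.mem_sInter.mp hff T₀ hT₀), ?_, ?_⟩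
  · intro ι f hconj hdisj hsat hmem
    obtain ⟨i₀, hi₀⟩ := (hF T₀ hT₀).1.s1 ι f hconj hdisj hsat (Set.mem_sInter.mp hmem T₀ hT₀)
    refine ⟨i₀, Set.mem_sInter.mpr fun T hT => ?_⟩
    obtain ⟨i, hi⟩ := (hF T hT).1.s1 ι f hconj hdisj hsat (Set.mem_sInter.mp hmem T hT)
    by_cases hij : i = i₀
    · exact hij ▸ hi
    · exact absurd (hdisj i i₀ hij)
        fun hcd => not_both_mem hS ((hF T hT).2 hi) ((hF T₀ hT₀).2 hi₀) hcd
  · rintro φ ⟨hW, Γ, hsub, hfin, hseq⟩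
    exact Set.mem_sInter.mpr fun T hT =>
      (hF T hT).1.s2 ⟨hW, Γ, hsub.trans (Set.sInter_subset_of_mem hT), hfin, hseq⟩

theorem finite_subset_dUnion {D : Set (LSt P A)} (hne : D.Nonempty)
    (hdir : DirectedOn (· ≤ ·) D) {X : Set (Fm P)} (hX : X.Finite) :
    X ⊆ (⋃ S ∈ D, S.val) → ∃ S ∈ D, X ⊆ S.val := by
  refine Set.Finite.induction_on
      (motive := fun X _ => X ⊆ (⋃ S ∈ D, S.val) → ∃ S ∈ D, X ⊆ S.val) X hX ?_ ?_
  · intro _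
    obtain ⟨S, hS⟩ := hne
    exact ⟨S, hS, Set.empty_subset _⟩
  · intro a X' hnm hfin ih
    · intro hsub
      obtain ⟨S₁, hS₁, hXS⟩ := ih fun x hx => hsub (Set.mem_insert_of_mem _ hx)
      have ha := hsub (Set.mem_insert _ _)
      simp only [Set.mem_iUnion] at ha
      obtain ⟨S₂, hS₂, haS⟩ := ha
      obtain ⟨S₃, hS₃, h13, h23⟩ := hdir S₁ hS₁ S₂ hS₂
      exact ⟨S₃, hS₃, Set.insert_subset (h23 haS) (hXS.trans h13)⟩

theorem state_dUnion {D : Set (LSt P A)} (hne : D.Nonempty)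
    (hdir : DirectedOn (· ≤ ·) D) :
    IsLogicalState (Fm.WF A) (Fm.Seq A) (⋃ S ∈ D, S.val) := by
  obtain ⟨T₀, hT₀⟩ := hne
  refine ⟨⟨Fm.tt, Set.mem_biUnion hT₀ (tt_mem_state T₀.2)⟩, ?_, ?_, ?_, ?_⟩
  · intro φ hφ
    simp only [Set.mem_iUnion] at hφ
    obtain ⟨S, _, hφS⟩ := hφ
    exact S.2.subset hφS
  · refine ne_wf_of_ff_not_mem fun hff => ?_
    simp only [Set.mem_iUnion] at hff
    obtain ⟨S, _, hffS⟩ := hff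
    exact ff_not_mem_state S.2 hffS
  · intro ι f hconj hdisj hsat hmem
    simp only [Set.mem_iUnion] at hmem
    obtain ⟨S, hS, hmemS⟩ := hmem
    obtain ⟨i, hi⟩ := S.2.s1 ι f hconj hdisj hsat hmemS
    exact ⟨i, Set.mem_biUnion hS hi⟩
  · rintro φ ⟨hW, Γ, hsub, hfin, hseq⟩
    obtain ⟨S, hS, hΓS⟩ := finite_subset_dUnion ⟨T₀, hT₀⟩ hdir hfin hsub
    exact Set.mem_biUnion hS (S.2.s2 ⟨hW, Γ, hΓS, hfin, hseq⟩)

/-- The supremum of a directed set of logical states. -/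
def dSup (D : Set (LSt P A)) (hne : D.Nonempty) (hdir : DirectedOn (· ≤ ·) D) :
    LSt P A := ⟨⋃ S ∈ D, S.val, state_dUnion hne hdir⟩

theorem isLUB_dSup (D : Set (LSt P A)) (hne : D.Nonempty)
    (hdir : DirectedOn (· ≤ ·) D) : IsLUB D (dSup D hne hdir) := by
  constructor
  · intro S hS
    exact Set.subset_biUnion_of_mem (u := fun S : LSt P A => S.val) hS
  · intro u hu
    intro φ hφ
    simp only [dSup, Set.mem_iUnion] at hφ
    obtain ⟨S, hS, hφS⟩ := hφ
    exact hu hS hφS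

theorem clIn_props {S : Set (Fm P)} (hS : IsLogicalState (Fm.WF A) (Fm.Seq A) S)
    {X : Set (Fm P)} (hX : X ⊆ S) :
    IsLogicalState (Fm.WF A) (Fm.Seq A) (clIn (Fm.WF A) (Fm.Seq A) X S) ∧
    X ⊆ clIn (Fm.WF A) (Fm.Seq A) X S ∧ clIn (Fm.WF A) (Fm.Seq A) X S ⊆ S := by
  have hSmem : S ∈ {T | IsLogicalState (Fm.WF A) (Fm.Seq A) T ∧ X ⊆ T ∧ T ⊆ S} :=
    ⟨hS, hX, subset_rfl⟩
  refine ⟨state_sInter hS ⟨S, hSmem⟩ (fun T hT => ⟨hT.1, hT.2.2⟩), ?_,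
    Set.sInter_subset_of_mem hSmem⟩
  exact fun φ hφ => Set.mem_sInter.mpr fun T hT => hT.2.1 hφ

theorem clIn_min {S X T : Set (Fm P)} (hT : IsLogicalState (Fm.WF A) (Fm.Seq A) T)
    (hXT : X ⊆ T) (hTS : T ⊆ S) : clIn (Fm.WF A) (Fm.Seq A) X S ⊆ T :=
  Set.sInter_subset_of_mem ⟨hT, hXT, hTS⟩

theorem clIn_mono {S X Y : Set (Fm P)} (hXY : X ⊆ Y) :
    clIn (Fm.WF A) (Fm.Seq A) X S ⊆ clIn (Fm.WF A) (Fm.Seq A) Y S :=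
  Set.sInter_subset_sInter fun T hT => ⟨hT.1, hXY.trans hT.2.1, hT.2.2⟩

/-- The compact state determined by a finite subset `X` of a state `x`. -/
def clSt (x : LSt P A) {X : Set (Fm P)} (hXx : X ⊆ x.val) : LSt P A :=
  ⟨clIn (Fm.WF A) (Fm.Seq A) X x.val, (clIn_props x.2 hXx).1⟩

theorem clSt_compact (x : LSt P A) {X : Set (Fm P)} (hX : X.Finite)
    (hXx : X ⊆ x.val) : IsCompactElt (clSt x hXx) := by
  intro D hne hdir s hlub hle
  have hs : s = dSup D hne hdir := hlub.unique (isLUB_dSup D hne hdir)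
  subst hs
  obtain ⟨d, hd, hXd⟩ := finite_subset_dUnion hne hdir hX
    (fun φ hφ => hle ((clIn_props x.2 hXx).2.1 hφ))
  refine ⟨d, hd, ?_⟩
  have hdle : d.val ⊆ (dSup D hne hdir).val := (isLUB_dSup D hne hdir).1 hd
  have hVstate : IsLogicalState (Fm.WF A) (Fm.Seq A)
      (⋂₀ {(clSt x hXx).val, d.val}) := by
    refine state_sInter (dSup D hne hdir).2 ⟨(clSt x hXx).val, Set.mem_insert _ _⟩ ?_
    rintro T (hT | hT)
    · exact hT ▸ ⟨(clSt x hXx).2, hle⟩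
    · rw [Set.mem_singleton_iff] at hT
      exact hT ▸ ⟨d.2, hdle⟩
  rw [Set.sInter_pair] at hVstate
  have hmin : (clSt x hXx).val ⊆ (clSt x hXx).val ∩ d.val :=
    clIn_min hVstate (Set.subset_inter (clIn_props x.2 hXx).2.1 hXd)
      ((Set.inter_subset_left).trans (clIn_props x.2 hXx).2.2)
  exact fun φ hφ => (hmin hφ).2

end Stmt9Aux

section Stmt9Aux2
variable {P : Type} {A : Set (Set P)}

theorem le_of_sub {a b : LSt P A} (h : a.val ⊆ b.val) : a ≤ b := h
theorem sub_of_le {a b : LSt P A} (h : a ≤ b) : a.val ⊆ b.val := h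

theorem exists_clSt_ge {x k : LSt P A} (hk : IsCompactElt k) (hkx : k ≤ x) :
    ∃ (X : Set (Fm P)) (hX : X.Finite) (hXx : X ⊆ x.val), k ≤ clSt x hXx := by
  set Dfam : Set (LSt P A) :=
    {c | ∃ (X : Set (Fm P)) (hX : X.Finite) (hXx : X ⊆ x.val), c = clSt x hXx} with hD
  have hne : Dfam.Nonempty :=
    ⟨clSt x (Set.empty_subset x.val), ∅, Set.finite_empty, Set.empty_subset _, rfl⟩
  have hdir : DirectedOn (· ≤ ·) Dfam := by
    rintro c₁ ⟨X₁, h₁, hx₁, rfl⟩ c₂ ⟨X₂, h₂, hx₂, rfl⟩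
    refine ⟨clSt x (X := X₁ ∪ X₂) (Set.union_subset hx₁ hx₂),
      ⟨X₁ ∪ X₂, h₁.union h₂, Set.union_subset hx₁ hx₂, rfl⟩,
      le_of_sub (clIn_mono Set.subset_union_left),
      le_of_sub (clIn_mono Set.subset_union_right)⟩
  have hlub : IsLUB Dfam x := by
    constructor
    · rintro c ⟨X, hX, hXx, rfl⟩
      exact le_of_sub (clIn_props x.2 hXx).2.2
    · intro w hw
      refine le_of_sub fun φ hφ => ?_
      have hmem : clSt x (Set.singleton_subset_iff.mpr hφ) ∈ Dfam :=
        ⟨{φ}, Set.finite_singleton _, Set.singleton_subset_iff.mpr hφ, rfl⟩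
      exact sub_of_le (hw hmem)
        ((clIn_props x.2 (Set.singleton_subset_iff.mpr hφ)).2.1 rfl)
  obtain ⟨c, hc, hkc⟩ := hk Dfam hne hdir x hlub hkx
  obtain ⟨X, hX, hXx, rfl⟩ := hc
  exact ⟨X, hX, hXx, hkc⟩

end Stmt9Aux2

/-- For any disjunctive sequent calculus `(L(P),⊢)`, the poset of
all logical states ordered by set inclusion is an algebraic L-domain. -/
theorem stmt9 (P : Type) (A : Set (Set P)) :
    IsAlgebraicLDomain (LSt P A) := by
  constructor
  · refine ⟨⟨⟨tautSet A, tautSet_state⟩, fun x => le_of_sub (tautSet_subset x.2)⟩,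
      fun d hne hdir => ⟨dSup d hne hdir, isLUB_dSup d hne hdir⟩, ?_⟩
    intro x
    have hKmem : ∀ (X : Set (Fm P)) (hX : X.Finite) (hXx : X ⊆ x.val),
        clSt x hXx ∈ {k : LSt P A | IsCompactElt k ∧ k ≤ x} :=
      fun X hX hXx => ⟨clSt_compact x hX hXx, le_of_sub (clIn_props x.2 hXx).2.2⟩
    refine ⟨⟨clSt x (Set.empty_subset x.val),
      hKmem ∅ Set.finite_empty (Set.empty_subset x.val)⟩, ?_, ?_⟩
    · rintro k₁ ⟨hc₁, hx₁⟩ k₂ ⟨hc₂, hx₂⟩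
      obtain ⟨X₁, hf₁, hs₁, hk₁⟩ := exists_clSt_ge hc₁ hx₁
      obtain ⟨X₂, hf₂, hs₂, hk₂⟩ := exists_clSt_ge hc₂ hx₂
      exact ⟨clSt x (Set.union_subset hs₁ hs₂),
        hKmem (X₁ ∪ X₂) (hf₁.union hf₂) (Set.union_subset hs₁ hs₂),
        le_trans hk₁ (le_of_sub (clIn_mono Set.subset_union_left)),
        le_trans hk₂ (le_of_sub (clIn_mono Set.subset_union_right))⟩
    · constructor
      · rintro k ⟨_, hk⟩
        exact hk
      · intro w hw
        refine le_of_sub fun φ hφ => ?_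
        exact sub_of_le
          (hw (hKmem {φ} (Set.finite_singleton φ) (Set.singleton_subset_iff.mpr hφ)))
          ((clIn_props x.2 (Set.singleton_subset_iff.mpr hφ)).2.1 rfl)
  · intro x T hT
    set F : Set (Set (Fm P)) := {U | IsLogicalState (Fm.WF A) (Fm.Seq A) U ∧
      (∀ t ∈ T, t.val ⊆ U) ∧ U ⊆ x.val} with hFdef
    have hxF : x.val ∈ F := ⟨x.2, fun t ht => sub_of_le (hT ht), subset_rfl⟩
    have hstate := state_sInter x.2 ⟨x.val, hxF⟩ (fun U hU => ⟨hU.1, hU.2.2⟩)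
    refine ⟨⟨⋂₀ F, hstate⟩, le_of_sub (Set.sInter_subset_of_mem hxF), ?_, ?_⟩
    · intro t ht
      exact le_of_sub fun φ hφ => Set.mem_sInter.mpr fun U hU => hU.2.1 t ht hφ
    · intro u hu hub
      exact le_of_sub (Set.sInter_subset_of_mem
        ⟨u.2, fun t ht => sub_of_le (hub t ht), sub_of_le hu⟩)
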